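/- There exists a constant C > 0 such that for every g ∈ C²([0,1], ℝ), one has ∫₀¹ |(d/dr)(r g(r))|² (1/r) dr ≤ C (∫₀¹ |(d/dr)(r g(r))|² (1 − r²)/r dr)^{2/3} (∫₀¹ |(Lg)(r)|² r dr)^{1/3} + C ∫₀¹ |(d/dr)(r g(r))|² (1 − r²)/r dr (quantities may be +∞). -/

import Mathlib

open MeasureTheory Set

/-- The operator `L g = g'' + g'/r - g/r²`. -/
noncomputable def Lre (g : ℝ → ℝ) (r : ℝ) : ℝ :=
  deriv (deriv g) r + deriv g r / r - g r / r ^ 2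


lemma coreB {S B1 D : ℝ} (hS : 0 ≤ S) (hB : 0 ≤ B1) (hD : 0 ≤ D)
    (H : ∀ δ : ℝ, 0 < δ → δ ≤ 1/12 → S ≤ 2*B1/δ + 16*B1 + 16*δ^2*D) :
    S ≤ 18 * B1 ^ ((2:ℝ)/3) * D ^ ((1:ℝ)/3) + 232 * B1 := by
  have hpos : 0 ≤ 18 * B1 ^ ((2:ℝ)/3) * D ^ ((1:ℝ)/3) :=
    mul_nonneg (mul_nonneg (by norm_num) (Real.rpow_nonneg hB _)) (Real.rpow_nonneg hD _)
  by_cases hcase : D ≤ 1728 * B1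
  · have h1 := H (1/12) (by norm_num) le_rfl
    have : S ≤ 40 * B1 + D / 9 := by
      have : 2*B1/(1/12:ℝ) = 24*B1 := by ring
      nlinarith [h1]
    linarith
  · push_neg at hcase
    have hD0 : 0 < D := lt_of_le_of_lt (by nlinarith) hcase
    by_cases hB0 : B1 = 0
    · subst hB0
      have hS0 : S ≤ 0 := by
        refine le_of_forall_pos_le_add ?_
        intro ε hε
        have hδ0 : 0 < min (1/12 : ℝ) (Real.sqrt (ε/(16*D))) := by
          apply lt_min (by norm_num)
          exact Real.sqrt_pos.mpr (by positivity)
        set δ := min (1/12 : ℝ) (Real.sqrt (ε/(16*D))) with hδdef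
        have h1 := H δ hδ0 (min_le_left _ _)
        have hδsq : δ^2 ≤ ε/(16*D) := by
          have h2 : δ ≤ Real.sqrt (ε/(16*D)) := min_le_right _ _
          have := Real.sq_sqrt (show (0:ℝ) ≤ ε/(16*D) by positivity)
          nlinarith [hδ0.le]
        have : 16*δ^2*D ≤ ε := by
          rw [le_div_iff₀ (by positivity)] at hδsq
          nlinarith
        simp only [mul_zero, zero_div, zero_add, mul_zero] at h1
        nlinarith [h1]
      have : S = 0 := le_antisymm hS0 hS
      rw [this]
      positivity
    · have hB1 : 0 < B1 := lt_of_le_of_ne hB (Ne.symm hB0)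
      set δ := (B1/D) ^ ((1:ℝ)/3) with hδdef
      have hδ0 : 0 < δ := Real.rpow_pos_of_pos (by positivity) _
      have hδle : δ ≤ 1/12 := by
        have hcube : ((1/12:ℝ))^(3:ℝ) = 1/1728 := by
          rw [show (3:ℝ) = ((3:ℕ):ℝ) from by norm_num, Real.rpow_natCast]; norm_num
        have h1 : B1/D ≤ (1/12:ℝ)^(3:ℝ) := by
          rw [hcube, div_le_iff₀ hD0]
          nlinarith
        calc δ ≤ (((1:ℝ)/12)^(3:ℝ)) ^ ((1:ℝ)/3) :=
              Real.rpow_le_rpow (by positivity) h1 (by norm_num)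
          _ = 1/12 := by
              rw [← Real.rpow_mul (by norm_num)]; norm_num
      have h1 := H δ hδ0 hδle
      -- compute 2*B1/δ and 16*δ^2*D
      have hBD : (0:ℝ) ≤ B1/D := by positivity
      have hsum : B1 ^ ((1:ℝ)/3) * B1 ^ ((2:ℝ)/3) = B1 := by
        rw [← Real.rpow_add hB1]; norm_num
      have hsumD : D ^ ((1:ℝ)/3) * D ^ ((2:ℝ)/3) = D := by
        rw [← Real.rpow_add hD0]; norm_num
      have hδeq : δ = B1 ^ ((1:ℝ)/3) / D ^ ((1:ℝ)/3) := by
        rw [hδdef, Real.div_rpow hB hD0.le]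
      have hD13 : (0:ℝ) < D ^ ((1:ℝ)/3) := Real.rpow_pos_of_pos hD0 _
      have hB13 : (0:ℝ) < B1 ^ ((1:ℝ)/3) := Real.rpow_pos_of_pos hB1 _
      have e1 : 2*B1/δ = 2 * B1 ^ ((2:ℝ)/3) * D ^ ((1:ℝ)/3) := by
        rw [hδeq, div_div_eq_mul_div, div_eq_iff hB13.ne']
        nlinarith [hsum]
      have e2 : 16*δ^2*D = 16 * B1 ^ ((2:ℝ)/3) * D ^ ((1:ℝ)/3) := by
        have : δ^2 = B1 ^ ((2:ℝ)/3) / D ^ ((2:ℝ)/3) := by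
          rw [hδeq, div_pow, ← Real.rpow_natCast (B1 ^ ((1:ℝ)/3)) 2,
            ← Real.rpow_natCast (D ^ ((1:ℝ)/3)) 2,
            ← Real.rpow_mul hB, ← Real.rpow_mul hD]
          norm_num
        rw [this]
        have hD23 : (0:ℝ) < D ^ ((2:ℝ)/3) := Real.rpow_pos_of_pos hD0 _
        field_simp
        linear_combination -hsumD
      rw [e1, e2] at h1
      linarith


set_option maxHeartbeats 1000000 in
lemma coreA (h h' L : ℝ → ℝ)
    (hder : ∀ r ∈ Icc (1/2:ℝ) 1, HasDerivAt h (h' r) r)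
    (hch : Continuous h) (hch' : ContinuousOn h' (Icc (1/2:ℝ) 1))
    (hcL : ContinuousOn (fun r => L r ^ 2 * r) (Icc (1/2:ℝ) 1))
    (hbound : ∀ r ∈ Icc (1/2:ℝ) 1, h' r ^ 2 ≤ 2 * (L r ^ 2 * r) + 8 * h r ^ 2)
    {δ : ℝ} (hδ0 : 0 < δ) (hδ : δ ≤ 1/12) :
    ∫ r in (1/2:ℝ)..1, h r ^ 2 ≤
      2 * (∫ r in (1/2:ℝ)..1, h r ^ 2 * (1-r)) / δ
      + 16 * (∫ r in (1/2:ℝ)..1, h r ^ 2 * (1-r))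
      + 16 * δ^2 * (∫ r in (1/2:ℝ)..1, L r ^ 2 * r) := by
  have h12 : (1/2:ℝ) ≤ 1 := by norm_num
  set t : ℝ := 4*δ with ht_def
  have ht0 : 0 < t := by positivity
  -- integrability helper
  have hsub : ∀ f : ℝ → ℝ, ContinuousOn f (Icc (1/2:ℝ) 1) → ∀ a b : ℝ,
      a ∈ Icc (1/2:ℝ) 1 → b ∈ Icc (1/2:ℝ) 1 → IntervalIntegrable f volume a b := by
    intro f hf a b ha hb
    exact (hf.mono (uIcc_subset_Icc ha hb)).intervalIntegrable
  have mem_half : (1/2:ℝ) ∈ Icc (1/2:ℝ) 1 := ⟨le_refl _, h12⟩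
  have mem_one : (1:ℝ) ∈ Icc (1/2:ℝ) 1 := ⟨h12, le_refl _⟩
  have hch2 : Continuous (fun r : ℝ => h r ^ 2) := hch.pow 2
  have hcB : Continuous (fun r : ℝ => h r ^ 2 * (1-r)) := hch2.mul (by continuity)
  have hch'2 : ContinuousOn (fun r => h' r ^ 2) (Icc (1/2:ℝ) 1) := hch'.pow 2
  have hcP : ContinuousOn (fun r => h r ^ 2 / t + t * h' r ^ 2) (Icc (1/2:ℝ) 1) :=
    ((hch2.continuousOn).div_const t).add (continuousOn_const.mul hch'2)
  have hc2hh' : ContinuousOn (fun x => 2 * h x * h' x) (Icc (1/2:ℝ) 1) :=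
    (continuousOn_const.mul hch.continuousOn).mul hch'
  set S := ∫ r in (1/2:ℝ)..1, h r ^ 2 with hS_def
  set B1 := ∫ r in (1/2:ℝ)..1, h r ^ 2 * (1-r) with hB1_def
  set D := ∫ r in (1/2:ℝ)..1, L r ^ 2 * r with hD_def
  set E := ∫ r in (1/2:ℝ)..1, h' r ^ 2 with hE_def
  have hS0 : 0 ≤ S := intervalIntegral.integral_nonneg h12 (fun x _ => sq_nonneg _)
  have hB10 : 0 ≤ B1 := intervalIntegral.integral_nonneg h12
    (fun x hx => mul_nonneg (sq_nonneg _) (by linarith [hx.2]))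
  have hD0 : 0 ≤ D := intervalIntegral.integral_nonneg h12
    (fun x hx => mul_nonneg (sq_nonneg _) (by linarith [hx.1]))
  have hE0 : 0 ≤ E := intervalIntegral.integral_nonneg h12 (fun x _ => sq_nonneg _)
  -- the L² bound on the derivative
  have hED : E ≤ 2*D + 8*S := by
    have step : E ≤ ∫ r in (1/2:ℝ)..1, (2 * (L r ^ 2 * r) + 8 * h r ^ 2) := by
      apply intervalIntegral.integral_mono_on h12 (hsub _ hch'2 _ _ mem_half mem_one)
        (hsub _ ((continuousOn_const.mul hcL).add
          (continuousOn_const.mul hch2.continuousOn)) _ _ mem_half mem_one)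
      exact hbound
    rwa [intervalIntegral.integral_add ((hsub _ hcL _ _ mem_half mem_one).const_mul 2)
      ((hch2.intervalIntegrable _ _).const_mul 8),
      intervalIntegral.integral_const_mul, intervalIntegral.integral_const_mul] at step
  -- minimum point on [1/2, 3/4]
  obtain ⟨s₀, hs₀mem, hs₀min⟩ := (isCompact_Icc : IsCompact (Icc (1/2:ℝ) (3/4))).exists_isMinOn
    ⟨1/2, by norm_num⟩ hch2.continuousOn
  have hs₀mem' : s₀ ∈ Icc (1/2:ℝ) 1 := ⟨hs₀mem.1, by linarith [hs₀mem.2]⟩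
  set m := h s₀ ^ 2 with hm_def
  have hm0 : 0 ≤ m := sq_nonneg _
  have hm16 : m ≤ 16 * B1 := by
    have step1 : m / 16 ≤ ∫ r in (1/2:ℝ)..(3/4), h r ^ 2 * (1-r) := by
      have const_int : ∫ _r in (1/2:ℝ)..(3/4), (m/4) = m/16 := by
        rw [intervalIntegral.integral_const, smul_eq_mul]; ring
      rw [← const_int]
      apply intervalIntegral.integral_mono_on (by norm_num)
        intervalIntegrable_const (hcB.intervalIntegrable _ _)
      intro x hx
      have h1 : m ≤ h x ^ 2 := hs₀min hx
      have h2 : (1/4:ℝ) ≤ 1 - x := by linarith [hx.2]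
      nlinarith [sq_nonneg (h x)]
    have step2 : (∫ r in (1/2:ℝ)..(3/4), h r ^ 2 * (1-r)) ≤ B1 := by
      apply intervalIntegral.integral_mono_interval (le_refl (1/2:ℝ)) (by norm_num) (by norm_num)
      · filter_upwards [ae_restrict_mem measurableSet_Ioc] with x hx
        exact mul_nonneg (sq_nonneg _) (by linarith [hx.2])
      · exact hcB.intervalIntegrable _ _
    linarith
  -- pointwise AM-GM bound for 2 h h'
  have hptwise : ∀ x, (2 * h x * h' x ≤ h x ^ 2 / t + t * h' x ^ 2) ∧
      (-(h x ^ 2 / t + t * h' x ^ 2) ≤ 2 * h x * h' x) := by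
    intro x
    have e : h x ^ 2 / t + t * h' x ^ 2 = (h x ^ 2 + t^2 * h' x ^ 2)/t := by
      field_simp
    constructor
    · rw [e, le_div_iff₀ ht0]
      nlinarith [sq_nonneg (h x - t * h' x)]
    · rw [e, neg_le, le_div_iff₀ ht0]
      nlinarith [sq_nonneg (h x + t * h' x)]
  -- FTC
  have ftc : ∀ a b : ℝ, a ∈ Icc (1/2:ℝ) 1 → b ∈ Icc (1/2:ℝ) 1 →
      ∫ x in a..b, 2 * h x * h' x = h b ^ 2 - h a ^ 2 := by
    intro a b ha hb
    apply intervalIntegral.integral_eq_sub_of_hasDerivAt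
    · intro x hx
      have hx' : x ∈ Icc (1/2:ℝ) 1 := uIcc_subset_Icc ha hb hx
      have hd := (hder x hx').fun_pow 2
      exact hd.congr_deriv (by ring)
    · exact hsub _ hc2hh' a b ha hb
  set P := ∫ r in (1/2:ℝ)..1, (h r ^ 2 / t + t * h' r ^ 2) with hP_def
  have hPval : P = S / t + t * E := by
    rw [hP_def, intervalIntegral.integral_add ((hch2.intervalIntegrable _ _).div_const t)
      ((hsub _ hch'2 _ _ mem_half mem_one).const_mul t),
      intervalIntegral.integral_div, intervalIntegral.integral_const_mul]
  have hPint : IntervalIntegrable (fun x => h x ^ 2 / t + t * h' x ^ 2) volume (1/2) 1 :=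
    hsub _ hcP _ _ mem_half mem_one
  -- sup bound
  have supbound : ∀ r ∈ Icc (1/2:ℝ) 1, h r ^ 2 ≤ 16 * B1 + P := by
    intro r hr
    have key : ∀ a b : ℝ, a ∈ Icc (1/2:ℝ) 1 → b ∈ Icc (1/2:ℝ) 1 → a ≤ b →
        (∫ x in a..b, 2 * h x * h' x) ≤ P := by
      intro a b ha hb hab
      calc (∫ x in a..b, 2 * h x * h' x)
          ≤ ∫ x in a..b, (h x ^ 2 / t + t * h' x ^ 2) := by
            apply intervalIntegral.integral_mono_on hab (hsub _ hc2hh' a b ha hb)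
              (hsub _ hcP a b ha hb)
            intro x _
            exact (hptwise x).1
        _ ≤ P := by
            apply intervalIntegral.integral_mono_interval ha.1 hab hb.2
            · filter_upwards [ae_restrict_mem measurableSet_Ioc] with x _
              positivity
            · exact hPint
    have keyneg : ∀ a b : ℝ, a ∈ Icc (1/2:ℝ) 1 → b ∈ Icc (1/2:ℝ) 1 → a ≤ b →
        -P ≤ (∫ x in a..b, 2 * h x * h' x) := by
      intro a b ha hb hab
      have step : (∫ x in a..b, -(h x ^ 2 / t + t * h' x ^ 2)) ≤ ∫ x in a..b, 2 * h x * h' x := by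
        apply intervalIntegral.integral_mono_on hab (hsub _ hcP a b ha hb).neg
          (hsub _ hc2hh' a b ha hb)
        intro x _
        exact (hptwise x).2
      rw [intervalIntegral.integral_neg] at step
      have h2 : (∫ x in a..b, (h x ^ 2 / t + t * h' x ^ 2)) ≤ P := by
        apply intervalIntegral.integral_mono_interval ha.1 hab hb.2
        · filter_upwards [ae_restrict_mem measurableSet_Ioc] with x _
          positivity
        · exact hPint
      linarith
    rcases le_total s₀ r with hc | hc
    · have e1 := ftc s₀ r hs₀mem' hr
      have h2 := key s₀ r hs₀mem' hr hc
      rw [e1] at h2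
      linarith
    · have e1 := ftc r s₀ hr hs₀mem'
      have h2 := keyneg r s₀ hr hs₀mem' hc
      rw [e1] at h2
      linarith
  have hP0 : 0 ≤ P := intervalIntegral.integral_nonneg h12
    (fun x _ => add_nonneg (by positivity) (by positivity))
  -- split the integral at 1-δ
  have split : S = (∫ r in (1/2:ℝ)..(1-δ), h r ^ 2) + ∫ r in (1-δ)..1, h r ^ 2 := by
    rw [hS_def, ← intervalIntegral.integral_add_adjacent_intervals
      (hch2.intervalIntegrable _ _) (hch2.intervalIntegrable (a := 1-δ) (b := 1))]
  have part1 : (∫ r in (1/2:ℝ)..(1-δ), h r ^ 2) ≤ B1 / δ := by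
    have s1 : (∫ r in (1/2:ℝ)..(1-δ), h r ^ 2) ≤ ∫ r in (1/2:ℝ)..(1-δ), h r ^ 2 * (1-r) / δ := by
      apply intervalIntegral.integral_mono_on (by linarith) (hch2.intervalIntegrable _ _)
        ((hcB.intervalIntegrable _ _).div_const δ)
      intro x hx
      rw [le_div_iff₀ hδ0]
      have hx2 : δ ≤ 1 - x := by linarith [hx.2]
      nlinarith [sq_nonneg (h x)]
    have s2 : (∫ r in (1/2:ℝ)..(1-δ), h r ^ 2 * (1-r) / δ)
        = (∫ r in (1/2:ℝ)..(1-δ), h r ^ 2 * (1-r)) / δ := intervalIntegral.integral_div _ _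
    have s3 : (∫ r in (1/2:ℝ)..(1-δ), h r ^ 2 * (1-r)) ≤ B1 := by
      apply intervalIntegral.integral_mono_interval (le_refl (1/2:ℝ)) (by linarith) (by linarith)
      · filter_upwards [ae_restrict_mem measurableSet_Ioc] with x hx
        exact mul_nonneg (sq_nonneg _) (by linarith [hx.2])
      · exact hcB.intervalIntegrable _ _
    calc (∫ r in (1/2:ℝ)..(1-δ), h r ^ 2)
        ≤ (∫ r in (1/2:ℝ)..(1-δ), h r ^ 2 * (1-r)) / δ := by rw [← s2]; exact s1
      _ ≤ B1 / δ := by gcongr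
  have part2 : (∫ r in (1-δ)..1, h r ^ 2) ≤ δ * (16*B1 + P) := by
    have step : (∫ r in (1-δ)..1, h r ^ 2) ≤ ∫ _r in (1-δ)..1, (16*B1 + P) := by
      apply intervalIntegral.integral_mono_on (by linarith) (hch2.intervalIntegrable _ _)
        intervalIntegrable_const
      intro x hx
      exact supbound x ⟨by linarith [hx.1], hx.2⟩
    rwa [intervalIntegral.integral_const, smul_eq_mul, show (1:ℝ)-(1-δ) = δ by ring] at step
  have main : S ≤ B1/δ + δ*(16*B1 + P) := by rw [split]; linarith
  have hPe : δ * P = S/4 + 4*δ^2*E := by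
    rw [hPval, ht_def]; field_simp
  have hexp : δ*(16*B1 + P) = 16*δ*B1 + δ*P := by ring
  have e4 : 4*δ^2*E ≤ 8*δ^2*D + 32*δ^2*S := by
    nlinarith [mul_le_mul_of_nonneg_left hED (show (0:ℝ) ≤ 4*δ^2 by positivity)]
  have hδ2 : δ^2 ≤ 1/144 := by nlinarith
  have h32 : 32*δ^2*S ≤ (1/4)*S := by
    nlinarith [mul_le_mul_of_nonneg_right hδ2 hS0]
  have h16 : 16*δ*B1 ≤ (4/3)*B1 := by nlinarith [hB10]
  have hatom : 2*B1/δ = 2*(B1/δ) := by ring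
  linarith

set_option maxHeartbeats 1000000 in
/-- There is `C > 0` such that for every `g ∈ C²([0,1])`,
`∫₀¹ |(d/dr)(rg)|² (1/r) dr ≤ C (∫₀¹ |(d/dr)(rg)|² (1−r²)/r dr)^{2/3} (∫₀¹ |Lg|² r dr)^{1/3}
  + C ∫₀¹ |(d/dr)(rg)|² (1−r²)/r dr` (quantities may be `+∞`). -/
theorem stmt5 :
    ∃ C : ℝ, 0 < C ∧ ∀ g : ℝ → ℝ, ContDiff ℝ 2 g →
      (∫⁻ r in Ioo (0:ℝ) 1, ENNReal.ofReal (|deriv (fun s => s * g s) r| ^ 2 / r))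
        ≤ ENNReal.ofReal C
            * (∫⁻ r in Ioo (0:ℝ) 1,
                ENNReal.ofReal (|deriv (fun s => s * g s) r| ^ 2 * (1 - r ^ 2) / r))
              ^ ((2:ℝ)/3)
            * (∫⁻ r in Ioo (0:ℝ) 1,
                ENNReal.ofReal (|Lre g r| ^ 2 * r)) ^ ((1:ℝ)/3)
          + ENNReal.ofReal C
            * ∫⁻ r in Ioo (0:ℝ) 1,
                ENNReal.ofReal (|deriv (fun s => s * g s) r| ^ 2 * (1 - r ^ 2) / r) := by
  refine ⟨500, by norm_num, fun g hg => ?_⟩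
  simp only [sq_abs]
  have h12 : (1/2:ℝ) ≤ 1 := by norm_num
  -- smoothness facts
  have hgd : Differentiable ℝ g := hg.differentiable (by norm_num)
  have hg1 : ContDiff ℝ 1 (deriv g) := by
    have h2 : ContDiff ℝ (1+1) g := by norm_num; exact hg
    exact (contDiff_succ_iff_deriv.mp h2).2.2
  have hgd' : Differentiable ℝ (deriv g) := hg1.differentiable one_ne_zero
  have hg'c : Continuous (deriv g) := hg1.continuous
  have hg''c : Continuous (deriv (deriv g)) := hg1.continuous_deriv le_rfl
  set k : ℝ → ℝ := fun s => s * g s with hk_def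
  have hkC : ContDiff ℝ 2 k := contDiff_id.mul hg
  have hhval : ∀ r, deriv k r = g r + r * deriv g r := by
    intro r
    have H : HasDerivAt k (1 * g r + r * deriv g r) r :=
      (hasDerivAt_id r).mul ((hgd r).hasDerivAt)
    rw [H.deriv]; ring
  have hh1 : ContDiff ℝ 1 (deriv k) := by
    have h2 : ContDiff ℝ (1+1) k := by norm_num; exact hkC
    exact (contDiff_succ_iff_deriv.mp h2).2.2
  have hhc : Continuous (deriv k) := hh1.continuous
  have hhd : ∀ r : ℝ, HasDerivAt (deriv k) (deriv (deriv k) r) r :=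
    fun r => ((hh1.differentiable one_ne_zero) r).hasDerivAt
  have hh'c : Continuous (deriv (deriv k)) := hh1.continuous_deriv le_rfl
  -- the key identity
  have hid : ∀ r : ℝ, r ≠ 0 → deriv (deriv k) r = r * Lre g r + deriv k r / r := by
    intro r hr
    have e1 : deriv k = fun s => g s + s * deriv g s := funext hhval
    have H : HasDerivAt (fun s => g s + s * deriv g s)
        (deriv g r + (1 * deriv g r + r * deriv (deriv g) r)) r :=
      ((hgd r).hasDerivAt).add ((hasDerivAt_id r).mul ((hgd' r).hasDerivAt))
    rw [e1, H.deriv]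
    simp only [Lre]
    field_simp
    ring
  -- pointwise bound on [1/2,1]
  have hbound : ∀ r ∈ Icc (1/2:ℝ) 1,
      deriv (deriv k) r ^ 2 ≤ 2 * (Lre g r ^ 2 * r) + 8 * deriv k r ^ 2 := by
    intro r hr
    have hrpos : (0:ℝ) < r := lt_of_lt_of_le (by norm_num) hr.1
    rw [hid r hrpos.ne']
    have hb : (deriv k r / r)^2 ≤ 4 * deriv k r ^2 := by
      rw [div_pow, div_le_iff₀ (by positivity)]
      have hr14 : (1/4:ℝ) ≤ r^2 := by nlinarith [hr.1]
      nlinarith [mul_le_mul_of_nonneg_left hr14 (show (0:ℝ) ≤ 4*deriv k r^2 by positivity)]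
    nlinarith [sq_nonneg (r * Lre g r - deriv k r / r), hb,
      mul_nonneg (mul_nonneg hrpos.le (sq_nonneg (Lre g r)))
        (show (0:ℝ) ≤ 1 - r by linarith [hr.2])]
  -- continuity of Lre on [1/2,1]
  have hLcOn : ContinuousOn (Lre g) (Icc (1/2:ℝ) 1) := by
    apply ContinuousOn.sub
    · apply ContinuousOn.add hg''c.continuousOn
      exact (hg'c.continuousOn).div continuousOn_id
        (fun x hx => ne_of_gt (lt_of_lt_of_le (by norm_num) hx.1))
    · exact (hg.continuous.continuousOn).div (by fun_prop)
        (fun x hx => pow_ne_zero 2 (ne_of_gt (lt_of_lt_of_le (by norm_num) hx.1)))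
  have hLc : ContinuousOn (fun r => Lre g r ^ 2 * r) (Icc (1/2:ℝ) 1) :=
    (hLcOn.pow 2).mul continuousOn_id
  -- real-variable core inequality
  set S := ∫ r in (1/2:ℝ)..1, deriv k r ^ 2 with hS_def
  set B1 := ∫ r in (1/2:ℝ)..1, deriv k r ^ 2 * (1-r) with hB1_def
  set D' := ∫ r in (1/2:ℝ)..1, Lre g r ^ 2 * r with hD_def
  have hS0 : 0 ≤ S := intervalIntegral.integral_nonneg h12 (fun x _ => sq_nonneg _)
  have hB10 : 0 ≤ B1 := intervalIntegral.integral_nonneg h12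
    (fun x hx => mul_nonneg (sq_nonneg _) (by linarith [hx.2]))
  have hD0 : 0 ≤ D' := intervalIntegral.integral_nonneg h12
    (fun x hx => mul_nonneg (sq_nonneg _) (by linarith [hx.1]))
  have hcore : S ≤ 18 * B1 ^ ((2:ℝ)/3) * D' ^ ((1:ℝ)/3) + 232 * B1 :=
    coreB hS0 hB10 hD0 (fun δ hδ0 hδ =>
      coreA (deriv k) (deriv (deriv k)) (Lre g) (fun r _ => hhd r) hhc
        hh'c.continuousOn hLc hbound hδ0 hδ)
  -- ENNReal bookkeeping
  set X := ∫⁻ r in Ioo (0:ℝ) 1, ENNReal.ofReal (deriv k r ^ 2 * (1 - r ^ 2) / r) with hX_def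
  set Y := ∫⁻ r in Ioo (0:ℝ) 1, ENNReal.ofReal (Lre g r ^ 2 * r) with hY_def
  have hsub1 : Ioc (0:ℝ) (1/2) ⊆ Ioo (0:ℝ) 1 :=
    fun x hx => ⟨hx.1, lt_of_le_of_lt hx.2 (by norm_num)⟩
  have hsub2 : Ioo (1/2:ℝ) 1 ⊆ Ioo (0:ℝ) 1 :=
    fun x hx => ⟨lt_trans (by norm_num) hx.1, hx.2⟩
  have hunion : Ioo (0:ℝ) 1 = Ioc 0 (1/2) ∪ Ioo (1/2) 1 :=
    (Ioc_union_Ioo_eq_Ioo (by norm_num) (by norm_num)).symm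
  have hdisj : Disjoint (Ioc (0:ℝ) (1/2)) (Ioo (1/2) 1) := by
    apply Set.disjoint_left.mpr
    intro x hx1 hx2
    exact absurd hx2.1 (not_lt.mpr hx1.2)
  have hsplitF : (∫⁻ r in Ioo (0:ℝ) 1, ENNReal.ofReal (deriv k r ^ 2 / r))
      = (∫⁻ r in Ioc (0:ℝ) (1/2), ENNReal.ofReal (deriv k r ^ 2 / r))
        + ∫⁻ r in Ioo (1/2:ℝ) 1, ENNReal.ofReal (deriv k r ^ 2 / r) := by
    rw [hunion, lintegral_union measurableSet_Ioo hdisj]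
  -- part I : near 0
  have hmeasX : Measurable (fun r : ℝ => ENNReal.ofReal (4/3)
      * ENNReal.ofReal (deriv k r ^ 2 * (1 - r ^ 2) / r)) := by
    apply Measurable.const_mul
    apply ENNReal.measurable_ofReal.comp
    exact ((hhc.measurable.pow_const 2).mul
      ((measurable_const.sub (measurable_id.pow_const 2)))).div measurable_id
  have partI : (∫⁻ r in Ioc (0:ℝ) (1/2), ENNReal.ofReal (deriv k r ^ 2 / r))
      ≤ ENNReal.ofReal (4/3) * X := by
    calc (∫⁻ r in Ioc (0:ℝ) (1/2), ENNReal.ofReal (deriv k r ^ 2 / r))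
        ≤ ∫⁻ r in Ioc (0:ℝ) (1/2), ENNReal.ofReal (4/3)
            * ENNReal.ofReal (deriv k r ^ 2 * (1 - r ^ 2) / r) := by
          apply setLIntegral_mono hmeasX
          intro x hx
          rw [← ENNReal.ofReal_mul (by norm_num)]
          apply ENNReal.ofReal_le_ofReal
          have hx0 : (0:ℝ) < x := hx.1
          have key : deriv k x ^ 2 ≤ 4/3 * (deriv k x ^ 2 * (1 - x^2)) := by
            have hx14 : x^2 ≤ 1/4 := by nlinarith [hx.1.le, hx.2]
            nlinarith [mul_le_mul_of_nonneg_left hx14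
              (show (0:ℝ) ≤ (4:ℝ)/3 * deriv k x ^ 2 by positivity)]
          calc deriv k x ^ 2 / x ≤ (4/3 * (deriv k x ^ 2 * (1 - x^2))) / x := by gcongr
            _ = 4/3 * (deriv k x ^ 2 * (1 - x^2) / x) := by ring
      _ = ENNReal.ofReal (4/3) * ∫⁻ r in Ioc (0:ℝ) (1/2),
            ENNReal.ofReal (deriv k r ^ 2 * (1 - r ^ 2) / r) :=
          lintegral_const_mul' _ _ ENNReal.ofReal_ne_top
      _ ≤ ENNReal.ofReal (4/3) * X := mul_le_mul_right (lintegral_mono_set hsub1) _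
  -- part II : near 1
  have hint2 : IntegrableOn (fun r : ℝ => 2 * deriv k r ^ 2) (Ioo (1/2:ℝ) 1) := by
    exact ((continuous_const.mul (hhc.pow 2)).integrableOn_Icc (a := 1/2) (b := 1)).mono_set
      Ioo_subset_Icc_self
  have hIoo_eq : (∫ r in Ioo (1/2:ℝ) 1, 2 * deriv k r ^ 2) = 2 * S := by
    rw [← integral_Ioc_eq_integral_Ioo, ← intervalIntegral.integral_of_le h12,
      intervalIntegral.integral_const_mul]
  have partII : (∫⁻ r in Ioo (1/2:ℝ) 1, ENNReal.ofReal (deriv k r ^ 2 / r))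
      ≤ ENNReal.ofReal (2 * S) := by
    calc (∫⁻ r in Ioo (1/2:ℝ) 1, ENNReal.ofReal (deriv k r ^ 2 / r))
        ≤ ∫⁻ r in Ioo (1/2:ℝ) 1, ENNReal.ofReal (2 * deriv k r ^ 2) := by
          apply setLIntegral_mono
          · exact ENNReal.measurable_ofReal.comp ((hhc.measurable.pow_const 2).const_mul 2)
          · intro x hx
            apply ENNReal.ofReal_le_ofReal
            rw [div_le_iff₀ (by linarith [hx.1] : (0:ℝ) < x)]
            nlinarith [sq_nonneg (deriv k x), hx.1]
      _ = ENNReal.ofReal (2 * S) := by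
          rw [← hIoo_eq]
          exact (ofReal_integral_eq_lintegral_ofReal hint2
            (Filter.Eventually.of_forall (fun x => by positivity))).symm
  -- comparison of B1 with X
  have hXB : ENNReal.ofReal B1 ≤ X := by
    have hintB : IntegrableOn (fun r : ℝ => deriv k r ^ 2 * (1-r)) (Ioo (1/2:ℝ) 1) := by
      exact (((hhc.pow 2).mul (by continuity)).integrableOn_Icc (a := 1/2) (b := 1)).mono_set
        Ioo_subset_Icc_self
    have e : ENNReal.ofReal B1
        = ∫⁻ r in Ioo (1/2:ℝ) 1, ENNReal.ofReal (deriv k r ^ 2 * (1-r)) := by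
      rw [hB1_def, intervalIntegral.integral_of_le h12, integral_Ioc_eq_integral_Ioo]
      apply ofReal_integral_eq_lintegral_ofReal hintB
      filter_upwards [ae_restrict_mem measurableSet_Ioo] with x hx
      exact mul_nonneg (sq_nonneg _) (by linarith [hx.2])
    rw [e]
    calc (∫⁻ r in Ioo (1/2:ℝ) 1, ENNReal.ofReal (deriv k r ^ 2 * (1-r)))
        ≤ ∫⁻ r in Ioo (1/2:ℝ) 1, ENNReal.ofReal (deriv k r ^ 2 * (1 - r ^ 2) / r) := by
          apply setLIntegral_mono
          · exact ENNReal.measurable_ofReal.comp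
              (((hhc.measurable.pow_const 2).mul
                (measurable_const.sub (measurable_id.pow_const 2))).div measurable_id)
          · intro x hx
            apply ENNReal.ofReal_le_ofReal
            rw [le_div_iff₀ (by linarith [hx.1] : (0:ℝ) < x)]
            nlinarith [mul_nonneg (sq_nonneg (deriv k x)) (show (0:ℝ) ≤ 1 - x by linarith [hx.2]), hx.1, hx.2]
      _ ≤ X := lintegral_mono_set hsub2
  -- comparison of D' with Y
  have hYD : ENNReal.ofReal D' ≤ Y := by
    have hintD : IntegrableOn (fun r : ℝ => Lre g r ^ 2 * r) (Ioo (1/2:ℝ) 1) :=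
      (hLc.integrableOn_Icc).mono_set Ioo_subset_Icc_self
    have e : ENNReal.ofReal D'
        = ∫⁻ r in Ioo (1/2:ℝ) 1, ENNReal.ofReal (Lre g r ^ 2 * r) := by
      rw [hD_def, intervalIntegral.integral_of_le h12, integral_Ioc_eq_integral_Ioo]
      apply ofReal_integral_eq_lintegral_ofReal hintD
      filter_upwards [ae_restrict_mem measurableSet_Ioo] with x hx
      exact mul_nonneg (sq_nonneg _) (by linarith [hx.1])
    rw [e]
    exact lintegral_mono_set hsub2
  -- assemble
  have hT1 : (0:ℝ) ≤ 18 * B1 ^ ((2:ℝ)/3) * D' ^ ((1:ℝ)/3) :=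
    mul_nonneg (mul_nonneg (by norm_num) (Real.rpow_nonneg hB10 _)) (Real.rpow_nonneg hD0 _)
  have hofS : ENNReal.ofReal (2*S)
      ≤ ENNReal.ofReal 36 * X ^ ((2:ℝ)/3) * Y ^ ((1:ℝ)/3) + ENNReal.ofReal 464 * X := by
    have step1 : ENNReal.ofReal (2*S)
        ≤ ENNReal.ofReal (36 * (B1 ^ ((2:ℝ)/3) * D' ^ ((1:ℝ)/3))) + ENNReal.ofReal (464 * B1) := by
      rw [← ENNReal.ofReal_add (by nlinarith) (by nlinarith)]
      apply ENNReal.ofReal_le_ofReal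
      nlinarith
    have step2 : ENNReal.ofReal (36 * (B1 ^ ((2:ℝ)/3) * D' ^ ((1:ℝ)/3)))
        = ENNReal.ofReal 36 * (ENNReal.ofReal B1) ^ ((2:ℝ)/3)
          * (ENNReal.ofReal D') ^ ((1:ℝ)/3) := by
      rw [ENNReal.ofReal_mul (by norm_num),
        ENNReal.ofReal_mul (Real.rpow_nonneg hB10 _),
        ENNReal.ofReal_rpow_of_nonneg hB10 (by norm_num),
        ENNReal.ofReal_rpow_of_nonneg hD0 (by norm_num), mul_assoc]
    have step3 : ENNReal.ofReal 36 * (ENNReal.ofReal B1) ^ ((2:ℝ)/3)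
          * (ENNReal.ofReal D') ^ ((1:ℝ)/3)
        ≤ ENNReal.ofReal 36 * X ^ ((2:ℝ)/3) * Y ^ ((1:ℝ)/3) := by
      apply mul_le_mul'
      · exact mul_le_mul' le_rfl (ENNReal.rpow_le_rpow hXB (by norm_num))
      · exact ENNReal.rpow_le_rpow hYD (by norm_num)
    have step4 : ENNReal.ofReal (464 * B1) ≤ ENNReal.ofReal 464 * X := by
      rw [ENNReal.ofReal_mul (by norm_num)]
      exact mul_le_mul' le_rfl hXB
    calc ENNReal.ofReal (2*S) ≤ _ := step1
      _ ≤ _ := add_le_add (step2 ▸ step3) step4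
  rw [hsplitF]
  calc (∫⁻ r in Ioc (0:ℝ) (1/2), ENNReal.ofReal (deriv k r ^ 2 / r))
        + (∫⁻ r in Ioo (1/2:ℝ) 1, ENNReal.ofReal (deriv k r ^ 2 / r))
      ≤ ENNReal.ofReal (4/3) * X
        + (ENNReal.ofReal 36 * X ^ ((2:ℝ)/3) * Y ^ ((1:ℝ)/3) + ENNReal.ofReal 464 * X) :=
        add_le_add partI (le_trans partII hofS)
    _ = ENNReal.ofReal 36 * X ^ ((2:ℝ)/3) * Y ^ ((1:ℝ)/3)
        + (ENNReal.ofReal (4/3) + ENNReal.ofReal 464) * X := by ring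
    _ ≤ ENNReal.ofReal 500 * X ^ ((2:ℝ)/3) * Y ^ ((1:ℝ)/3) + ENNReal.ofReal 500 * X := by
        apply add_le_add
        · apply mul_le_mul' (mul_le_mul' (ENNReal.ofReal_le_ofReal (by norm_num)) le_rfl) le_rfl
        · apply mul_le_mul' _ le_rfl
          rw [← ENNReal.ofReal_add (by norm_num) (by norm_num)]
          exact ENNReal.ofReal_le_ofReal (by norm_num)
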